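/- Let r ≥ 3 and let d, m_1, …, m_r be non-negative integers with m_1 ≥ m_2 ≥ ⋯ ≥ m_r. If d² − m_1² − ⋯ − m_r² = −1 and −3d + m_1 + ⋯ + m_r = −1, then d < m_1 + m_2 + m_3. -/
import Mathlib


/-- **Noether's inequality.** Let `r ≥ 3` and let `d, m_1, …, m_r` be non-negative
integers with `m_1 ≥ m_2 ≥ ⋯ ≥ m_r` (here `m_i` is `m ⟨i-1, _⟩`). If
`d² − m_1² − ⋯ − m_r² = −1` and `−3d + m_1 + ⋯ + m_r = −1`, then
`d < m_1 + m_2 + m_3`. -/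
theorem noether_inequality (r : ℕ) (hr : 3 ≤ r) (d : ℕ) (m : Fin r → ℕ)
    (hmono : ∀ i j : Fin r, i ≤ j → m j ≤ m i)
    (h1 : (d : ℤ) ^ 2 - ∑ i, (m i : ℤ) ^ 2 = -1)
    (h2 : -3 * (d : ℤ) + ∑ i, (m i : ℤ) = -1) :
    (d : ℤ) < (m ⟨0, by omega⟩ : ℤ) + (m ⟨1, by omega⟩ : ℤ) + (m ⟨2, by omega⟩ : ℤ) := by
  set i0 : Fin r := ⟨0, by omega⟩
  set i1 : Fin r := ⟨1, by omega⟩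
  set i2 : Fin r := ⟨2, by omega⟩
  set a : ℤ := (m i0 : ℤ) with ha
  set b : ℤ := (m i1 : ℤ) with hb
  set c : ℤ := (m i2 : ℤ) with hc
  have hba : b ≤ a := Int.ofNat_le.mpr (hmono i0 i1 (by simp [i0, i1, Fin.le_def]))
  have hcb : c ≤ b := Int.ofNat_le.mpr (hmono i1 i2 (by simp [i1, i2, Fin.le_def]))
  have hc0 : 0 ≤ c := Int.natCast_nonneg _
  have hd0 : 0 ≤ (d : ℤ) := Int.natCast_nonneg _
  -- key inequality
  have key : ∑ i, ((m i : ℤ) * ((m i : ℤ) - c)) ≤ a * (a - c) + b * (b - c) := by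
    have hmem0 : i0 ∈ Finset.univ.erase i1 := by
      simp [Fin.ext_iff, i0, i1]
    have e1 : ∑ i, ((m i : ℤ) * ((m i : ℤ) - c))
        = b * (b - c) + ∑ i ∈ Finset.univ.erase i1, ((m i : ℤ) * ((m i : ℤ) - c)) :=
      (Finset.add_sum_erase _ _ (Finset.mem_univ i1)).symm
    have e2 : ∑ i ∈ Finset.univ.erase i1, ((m i : ℤ) * ((m i : ℤ) - c))
        = a * (a - c) + ∑ i ∈ (Finset.univ.erase i1).erase i0, ((m i : ℤ) * ((m i : ℤ) - c)) :=
      (Finset.add_sum_erase _ _ hmem0).symm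
    have e3 : ∑ i ∈ (Finset.univ.erase i1).erase i0, ((m i : ℤ) * ((m i : ℤ) - c)) ≤ 0 := by
      apply Finset.sum_nonpos
      intro i hi
      simp only [Finset.mem_erase] at hi
      have h0 : (i : ℕ) ≠ 0 := fun h => hi.1 (by simp [i0, Fin.ext_iff, h])
      have h1' : (i : ℕ) ≠ 1 := fun h => hi.2.1 (by simp [i1, Fin.ext_iff, h])
      have h2i : i2 ≤ i := by
        rw [Fin.le_def]
        show 2 ≤ (i : ℕ)
        omega
      have hmc : (m i : ℤ) ≤ c := Int.ofNat_le.mpr (hmono i2 i h2i)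
      have hm0 : (0 : ℤ) ≤ (m i : ℤ) := Int.natCast_nonneg _
      nlinarith
    linarith [e1, e2.le, e3]
  have hS2 : ∑ i, (m i : ℤ) ^ 2 = (d : ℤ) ^ 2 + 1 := by linarith
  have hS1 : ∑ i, (m i : ℤ) = 3 * d - 1 := by linarith
  have expand : ∑ i, ((m i : ℤ) * ((m i : ℤ) - c))
      = (∑ i, (m i : ℤ) ^ 2) - c * ∑ i, (m i : ℤ) := by
    rw [Finset.mul_sum, ← Finset.sum_sub_distrib]
    apply Finset.sum_congr rfl
    intro i _
    ring
  rw [expand, hS2, hS1] at key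
  by_contra hcon
  push_neg at hcon
  nlinarith [mul_nonneg (by linarith : (0:ℤ) ≤ (d:ℤ) - (a+b+c)) (by linarith : (0:ℤ) ≤ a + b - 2*c),
    mul_nonneg (by linarith : (0:ℤ) ≤ b - c) (by linarith : (0:ℤ) ≤ a - c)]
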